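/- Let A be a unital C*-algebra over ℂ, let f ∈ A be self-adjoint, and let t ∈ A be positive and invertible. Then ‖f‖ ≤ ‖t^{-1/2} f t^{1/2}‖, and moreover ‖t^{-1/2} f t^{1/2}‖ = ‖t^{1/2} f t^{-1/2}‖. -/

import Mathlib

open scoped NNReal ENNReal


/-- **Corollary A.3 (bounded case).** Let `A` be a unital C*-algebra, `f` a self-adjoint element,
and `t` a positive invertible element.  Then `‖f‖ ≤ ‖t^{-1/2} * f * t^{1/2}‖` and moreover
`‖t^{-1/2} * f * t^{1/2}‖ = ‖t^{1/2} * f * t^{-1/2}‖`. -/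
theorem norm_le_norm_sqrt_inv_mul_selfAdjoint_mul_sqrt
    {A : Type*} [CStarAlgebra A] [PartialOrder A] [StarOrderedRing A]
    (f t : A) (hf : IsSelfAdjoint f) (ht : 0 ≤ t) (htu : IsUnit t) :
    ‖f‖ ≤ ‖CFC.sqrt (Ring.inverse t) * f * CFC.sqrt t‖ ∧
    ‖CFC.sqrt (Ring.inverse t) * f * CFC.sqrt t‖ = ‖CFC.sqrt t * f * CFC.sqrt (Ring.inverse t)‖ := by
  nontriviality A
  lift t to Aˣ using htu
  rw [Ring.inverse_unit]
  have ht' : (0 : A) ≤ ↑t⁻¹ := CFC.inv_nonneg_of_nonneg t ht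
  have hspec : (0 : ℝ≥0) ∉ spectrum ℝ≥0 (t : A) := spectrum.zero_notMem ℝ≥0 t.isUnit
  have hinv_eq : CFC.sqrt (↑t⁻¹ : A) = (t : A) ^ (-(1 / 2) : ℝ) := by
    rw [CFC.sqrt_eq_rpow (a := (↑t⁻¹ : A)), ← CFC.rpow_neg t (1 / 2) ht]
  have hmul₁ : CFC.sqrt (↑t⁻¹ : A) * CFC.sqrt (t : A) = 1 := by
    rw [hinv_eq, CFC.sqrt_eq_rpow (a := (t : A)), CFC.rpow_neg_mul_rpow _ (t.isUnit.isStrictlyPositive ht)]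
  have hmul₂ : CFC.sqrt (t : A) * CFC.sqrt (↑t⁻¹ : A) = 1 := by
    rw [hinv_eq, CFC.sqrt_eq_rpow (a := (t : A)), CFC.rpow_mul_rpow_neg _ (t.isUnit.isStrictlyPositive ht)]
  -- the unit whose value is `sqrt t` and inverse `sqrt t⁻¹`
  set u : Aˣ := ⟨CFC.sqrt (t : A), CFC.sqrt (↑t⁻¹ : A), hmul₂, hmul₁⟩ with hu
  have hkey : CFC.sqrt (↑t⁻¹ : A) * f * CFC.sqrt (t : A) = ↑u⁻¹ * f * ↑u := rfl
  constructor
  · have h1 : (‖f‖₊ : ℝ≥0∞) = spectralRadius ℂ f := hf.spectralRadius_eq_nnnorm.symm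
    have h2 : spectralRadius ℂ (↑u⁻¹ * f * ↑u) = spectralRadius ℂ f := by
      unfold spectralRadius
      rw [spectrum.units_conjugate']
    have h3 : spectralRadius ℂ (↑u⁻¹ * f * ↑u : A) ≤ ‖(↑u⁻¹ * f * ↑u : A)‖₊ :=
      spectrum.spectralRadius_le_nnnorm _
    rw [hkey]
    have := h1.trans_le (h2.symm.trans_le h3)
    exact_mod_cast ENNReal.coe_le_coe.mp this
  · rw [← norm_star (CFC.sqrt (↑t⁻¹ : A) * f * CFC.sqrt (t : A))]
    congr 1
    simp only [star_mul, hf.star_eq, (IsSelfAdjoint.of_nonneg (CFC.sqrt_nonneg (A := A) _)).star_eq, mul_assoc]
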